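/- Let a, b be integers with 2 ≤ a ≤ b. Then ᾱ(K_a ⊕₁ K_b) = min{2a − 1, b}. -/

import Mathlib

namespace SimpleGraph

variable {V : Type*}

/-- `G` has an `(s,t)`-bipartite-hole. -/
def HasBipHole (G : SimpleGraph V) (s t : ℕ) : Prop :=
  ∃ S T : Finset V, Disjoint S T ∧ S.card = s ∧ T.card = t ∧
    ∀ a ∈ S, ∀ b ∈ T, ¬ G.Adj a b

/-- The bipartite-hole-number `ᾱ(G)`. -/
noncomputable def bipHoleNum (G : SimpleGraph V) : ℕ :=
  sInf {k | 0 < k ∧ ∃ s t : ℕ, 0 < s ∧ 0 < t ∧ s + t = k + 1 ∧ ¬ G.HasBipHole s t}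

end SimpleGraph

/-- `K_a ⊕₁ K_b`: the 1-sum of two complete graphs, on `a + b - 1` vertices; the vertices
`0, …, a-1` form one clique and the vertices `a-1, …, a+b-2` form the other, with the
vertex `a-1` shared. -/
def oneSumGraph (a b : ℕ) : SimpleGraph (Fin (a + b - 1)) where
  Adj x y := x ≠ y ∧ ((x.val < a ∧ y.val < a) ∨ (a ≤ x.val + 1 ∧ a ≤ y.val + 1))
  symm := by
    constructor
    rintro x y ⟨hxy, h⟩
    exact ⟨hxy.symm, by tauto⟩
  loopless := by constructor; rintro x ⟨hx, -⟩; exact hx rfl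

lemma hasBipHole_symm {V : Type*} {G : SimpleGraph V} {s t : ℕ}
    (h : G.HasBipHole s t) : G.HasBipHole t s := by
  obtain ⟨S, T, hd, hS, hT, hadj⟩ := h
  exact ⟨T, S, hd.symm, hT, hS, fun x hx y hy hxy => hadj y hy x hx hxy.symm⟩

lemma hole_construct (a b s t : ℕ) (ha : 2 ≤ a) (hab : a ≤ b)
    (hsb : s ≤ b - 1) (hta : t ≤ a - 1) :
    (oneSumGraph a b).HasBipHole s t := by
  have hn1 : ∀ m ∈ Finset.Ico a (a + s), m < a + b - 1 := by
    intro m hm; simp [Finset.mem_Ico] at hm; omega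
  have hn2 : ∀ m ∈ Finset.range t, m < a + b - 1 := by
    intro m hm; simp at hm; omega
  refine ⟨(Finset.Ico a (a+s)).attachFin hn1, (Finset.range t).attachFin hn2, ?_, ?_, ?_, ?_⟩
  · rw [Finset.disjoint_left]
    intro x hx hx'
    rw [Finset.mem_attachFin, Finset.mem_Ico] at hx
    rw [Finset.mem_attachFin, Finset.mem_range] at hx'
    omega
  · rw [Finset.card_attachFin, Nat.card_Ico]; omega
  · rw [Finset.card_attachFin, Finset.card_range]
  · intro x hx y hy
    rw [Finset.mem_attachFin, Finset.mem_Ico] at hx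
    rw [Finset.mem_attachFin, Finset.mem_range] at hy
    rintro ⟨-, h⟩
    rcases h with ⟨h1, h2⟩ | ⟨h1, h2⟩ <;> omega

lemma hole_bound (a b s t : ℕ) (ha : 2 ≤ a) (hab : a ≤ b) (hs : 0 < s) (ht : 0 < t)
    (h : (oneSumGraph a b).HasBipHole s t) :
    (s ≤ b - 1 ∧ t ≤ a - 1) ∨ (s ≤ a - 1 ∧ t ≤ b - 1) := by
  obtain ⟨S, T, hd, hS, hT, hadj⟩ := h
  obtain ⟨x0, hx0⟩ := Finset.card_pos.mp (hS ▸ hs)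
  obtain ⟨y0, hy0⟩ := Finset.card_pos.mp (hT ▸ ht)
  have key : ∀ x ∈ S, ∀ y ∈ T,
      (a ≤ x.val ∧ y.val + 2 ≤ a) ∨ (a ≤ y.val ∧ x.val + 2 ≤ a) := by
    intro x hx y hy
    have hne : x ≠ y := fun hxy => (Finset.disjoint_left.mp hd hx) (hxy ▸ hy)
    have hna := hadj x hx y hy
    have hP : ¬ ((x.val < a ∧ y.val < a) ∨ (a ≤ x.val + 1 ∧ a ≤ y.val + 1)) :=
      fun hp => hna ⟨hne, hp⟩
    push_neg at hP
    omega
  have cardS_ge : ∀ l : ℕ, (∀ x ∈ S, x.val ∈ Finset.Ico l (a + b - 1)) →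
      s ≤ a + b - 1 - l := by
    intro l hsub
    calc s = S.card := hS.symm
      _ ≤ (Finset.Ico l (a + b - 1)).card :=
          Finset.card_le_card_of_injOn (fun x => x.val) hsub
            (fun x _ y _ hxy => Fin.ext hxy)
      _ = a + b - 1 - l := Nat.card_Ico l (a + b - 1)
  have cardS_le : ∀ u : ℕ, (∀ x ∈ S, x.val ∈ Finset.range u) → s ≤ u := by
    intro u hsub
    calc s = S.card := hS.symm
      _ ≤ (Finset.range u).card :=
          Finset.card_le_card_of_injOn (fun x => x.val) hsub
            (fun x _ y _ hxy => Fin.ext hxy)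
      _ = u := Finset.card_range u
  have cardT_ge : ∀ l : ℕ, (∀ y ∈ T, y.val ∈ Finset.Ico l (a + b - 1)) →
      t ≤ a + b - 1 - l := by
    intro l hsub
    calc t = T.card := hT.symm
      _ ≤ (Finset.Ico l (a + b - 1)).card :=
          Finset.card_le_card_of_injOn (fun x => x.val) hsub
            (fun x _ y _ hxy => Fin.ext hxy)
      _ = a + b - 1 - l := Nat.card_Ico l (a + b - 1)
  have cardT_le : ∀ u : ℕ, (∀ y ∈ T, y.val ∈ Finset.range u) → t ≤ u := by
    intro u hsub
    calc t = T.card := hT.symm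
      _ ≤ (Finset.range u).card :=
          Finset.card_le_card_of_injOn (fun x => x.val) hsub
            (fun x _ y _ hxy => Fin.ext hxy)
      _ = u := Finset.card_range u
  rcases key x0 hx0 y0 hy0 with ⟨h1, h2⟩ | ⟨h1, h2⟩
  · -- S on the right (≥ a), T on the left (≤ a - 2)
    left
    constructor
    · have h3 : s ≤ a + b - 1 - a := by
        apply cardS_ge
        intro x hx
        rw [Finset.mem_Ico]
        refine ⟨?_, x.isLt⟩
        rcases key x hx y0 hy0 with ⟨h, _⟩ | ⟨h, h'⟩
        · exact h
        · omega
      omega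
    · have h3 : t ≤ a - 1 := by
        apply cardT_le
        intro y hy
        rw [Finset.mem_range]
        rcases key x0 hx0 y hy with ⟨h, h'⟩ | ⟨h, h'⟩ <;> omega
      exact h3
  · -- S on the left, T on the right
    right
    constructor
    · have h3 : s ≤ a - 1 := by
        apply cardS_le
        intro x hx
        rw [Finset.mem_range]
        rcases key x hx y0 hy0 with ⟨h, h'⟩ | ⟨h, h'⟩ <;> omega
      exact h3
    · have h3 : t ≤ a + b - 1 - a := by
        apply cardT_ge
        intro y hy
        rw [Finset.mem_Ico]
        refine ⟨?_, y.isLt⟩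
        rcases key x0 hx0 y hy with ⟨h, h'⟩ | ⟨h, h'⟩ <;> omega
      omega

/-- For `2 ≤ a ≤ b`, `ᾱ(K_a ⊕₁ K_b) = min (2a - 1) b`. -/
theorem stmt16 (a b : ℕ) (ha : 2 ≤ a) (hab : a ≤ b) :
    (oneSumGraph a b).bipHoleNum = min (2 * a - 1) b := by
  set m := min (2 * a - 1) b with hm
  have hmpos : 0 < m := by omega
  have mem : m ∈ {k | 0 < k ∧ ∃ s t : ℕ, 0 < s ∧ 0 < t ∧ s + t = k + 1 ∧
      ¬ (oneSumGraph a b).HasBipHole s t} := by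
    refine ⟨hmpos, ?_⟩
    by_cases hc : 2 * a - 1 ≤ b
    · refine ⟨a, a, by omega, by omega, by omega, ?_⟩
      intro h
      rcases hole_bound a b a a ha hab (by omega) (by omega) h with ⟨h1, h2⟩ | ⟨h1, h2⟩ <;> omega
    · refine ⟨b, 1, by omega, by omega, by omega, ?_⟩
      intro h
      rcases hole_bound a b b 1 ha hab (by omega) (by omega) h with ⟨h1, h2⟩ | ⟨h1, h2⟩ <;> omega
  rw [SimpleGraph.bipHoleNum]
  refine le_antisymm (Nat.sInf_le mem) (le_csInf ⟨m, mem⟩ ?_)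
  rintro k ⟨hk, s, t, hs, ht, hst, hnh⟩
  by_contra hlt
  push_neg at hlt
  have hstm : s + t ≤ m := by omega
  rcases le_or_gt t (a - 1) with h1 | h1
  · exact hnh (hole_construct a b s t ha hab (by omega) h1)
  · have hs' : s ≤ a - 1 := by omega
    exact hnh (hasBipHole_symm (hole_construct a b t s ha hab (by omega) hs'))
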